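/- Let d₀ > 0, d_c ≥ 0, and p_o ∈ ℝ³. Let x ∈ ℝ³ be such that r̂ := ‖x − p_o‖ − d_c satisfies 0 < r̂ < d₀. Then the function G(y) := (1/2)·(log(d₀² / (d₀² − (d₀ − (‖y − p_o‖ − d_c))²)))² is differentiable at x, and its negative gradient equals −∇G(x) = (2 / (d₀² − (d₀ − r̂)²)) · log(d₀² / (d₀² − (d₀ − r̂)²)) · (d₀ − r̂) · (x − p_o)/‖x − p_o‖. -/

import Mathlib

open Real

section Aux
variable {F : Type*} [NormedAddCommGroup F] [InnerProductSpace ℝ F] [CompleteSpace F]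

lemma toDual_eq_innerSL' (v : F) : (InnerProductSpace.toDual ℝ F v : F →L[ℝ] ℝ) = innerSL ℝ v := by
  ext w; simp [InnerProductSpace.toDual_apply_apply]

lemma hasGradientAt_norm_sub' {p x : F} (hx : x ≠ p) :
    HasGradientAt (fun y => ‖y - p‖) ((‖x - p‖)⁻¹ • (x - p)) x := by
  have hne : ‖x - p‖ ≠ 0 := by simpa [sub_eq_zero] using hx
  have hsq : HasFDerivAt (fun y : F => ‖y - p‖ ^ 2)
      (2 • (innerSL ℝ (x - p))) x := by
    have := (hasStrictFDerivAt_norm_sq (x - p)).hasFDerivAt.comp x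
      ((hasFDerivAt_id x).sub_const p)
    exact this.congr_fderiv (by simp)
  have hsqrt : HasDerivAt Real.sqrt (1 / (2 * Real.sqrt (‖x - p‖ ^ 2))) (‖x - p‖ ^ 2) :=
    Real.hasDerivAt_sqrt (by positivity)
  have h := hsqrt.comp_hasFDerivAt x hsq
  have heq : (fun y : F => Real.sqrt (‖y - p‖ ^ 2)) = fun y => ‖y - p‖ := by
    funext y; exact Real.sqrt_sq (norm_nonneg _)
  rw [Function.comp_def, heq] at h
  rw [hasGradientAt_iff_hasFDerivAt, toDual_eq_innerSL']
  refine h.congr_fderiv ?_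
  rw [Real.sqrt_sq (norm_nonneg _)]
  ext w
  simp [ContinuousLinearMap.smul_apply, real_inner_smul_left, smul_smul]
  ring

lemma HasGradientAt.scomp' {n : F → ℝ} {g : F} {φ : ℝ → ℝ} {c : ℝ} {x : F}
    (hφ : HasDerivAt φ c (n x)) (hn : HasGradientAt n g x) :
    HasGradientAt (fun y => φ (n y)) (c • g) x := by
  rw [hasGradientAt_iff_hasFDerivAt] at hn ⊢
  have := hφ.comp_hasFDerivAt x hn
  simpa [Function.comp_def, map_smul] using this

end Aux

/-- Equations (9)–(11): the barrier potential `G(y) = V(‖y − p_o‖ − d_c)` is differentiable at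
any point `x` with `0 < r̂ < d₀` (where `r̂ = ‖x − p_o‖ − d_c`) and its negative gradient is the
repulsive velocity `(2/(d₀² − (d₀ − r̂)²)) log(d₀²/(d₀² − (d₀ − r̂)²)) (d₀ − r̂) (x − p_o)/‖x − p_o‖`. -/
theorem barrier_potential_gradient
    (d₀ d_c : ℝ) (hd₀ : 0 < d₀) (hdc : 0 ≤ d_c)
    (p_o x : EuclideanSpace ℝ (Fin 3))
    (hr1 : 0 < ‖x - p_o‖ - d_c) (hr2 : ‖x - p_o‖ - d_c < d₀)
    (G : EuclideanSpace ℝ (Fin 3) → ℝ)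
    (hG : ∀ y, G y = (1/2) * (Real.log (d₀ ^ 2 /
        (d₀ ^ 2 - (d₀ - (‖y - p_o‖ - d_c)) ^ 2))) ^ 2) :
    DifferentiableAt ℝ G x ∧
    -gradient G x =
      ((2 / (d₀ ^ 2 - (d₀ - (‖x - p_o‖ - d_c)) ^ 2)) *
        Real.log (d₀ ^ 2 / (d₀ ^ 2 - (d₀ - (‖x - p_o‖ - d_c)) ^ 2)) *
        (d₀ - (‖x - p_o‖ - d_c))) • ((‖x - p_o‖)⁻¹ • (x - p_o)) := by
  set r : ℝ := ‖x - p_o‖ with hrdef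
  set s : ℝ := d₀ - (r - d_c) with hsdef
  set A : ℝ := d₀ ^ 2 - s ^ 2 with hAdef
  have hs0 : 0 < s := by simp [hsdef]; linarith
  have hsd : s < d₀ := by simp [hsdef]; linarith
  have hA : 0 < A := by nlinarith
  have hxp : x ≠ p_o := by
    intro h
    rw [h] at hrdef
    simp [hrdef] at hr1
    linarith
  -- derivative of the scalar barrier function
  have h1 : HasDerivAt (fun t : ℝ => d₀ - (t - d_c)) (-1) r := by
    simpa using ((hasDerivAt_id r).sub_const d_c).const_sub d₀
  have h2 : HasDerivAt (fun t : ℝ => d₀ ^ 2 - (d₀ - (t - d_c)) ^ 2) (2 * s) r := by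
    have := (h1.pow 2).const_sub (d₀ ^ 2)
    refine this.congr_deriv ?_
    simp [hsdef]
  have h3 : HasDerivAt (fun t : ℝ => d₀ ^ 2 / (d₀ ^ 2 - (d₀ - (t - d_c)) ^ 2))
      (-(d₀ ^ 2 * (2 * s)) / A ^ 2) r := by
    have := (hasDerivAt_const r (d₀ ^ 2)).div h2 (by rw [← hAdef] at *; exact hA.ne')
    refine this.congr_deriv ?_
    rw [← hsdef, ← hAdef]; ring
  have hq : d₀ ^ 2 / (d₀ ^ 2 - (d₀ - (r - d_c)) ^ 2) ≠ 0 := by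
    rw [← hsdef, ← hAdef]
    positivity
  have h4 := h3.log hq
  have h5 := (h4.pow 2).const_mul (1/2 : ℝ)
  have hφ : HasDerivAt (fun t : ℝ => (1/2) * (Real.log (d₀ ^ 2 /
        (d₀ ^ 2 - (d₀ - (t - d_c)) ^ 2))) ^ 2)
      (-((2 / A) * Real.log (d₀ ^ 2 / A) * s)) r := by
    refine h5.congr_deriv ?_
    rw [← hsdef, ← hAdef]
    field_simp
    ring
  have hn : HasGradientAt (fun y : EuclideanSpace ℝ (Fin 3) => ‖y - p_o‖)
      ((‖x - p_o‖)⁻¹ • (x - p_o)) x := hasGradientAt_norm_sub' hxp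
  have hGrad : HasGradientAt G
      ((-((2 / A) * Real.log (d₀ ^ 2 / A) * s)) • ((‖x - p_o‖)⁻¹ • (x - p_o))) x := by
    have := HasGradientAt.scomp' (n := fun y : EuclideanSpace ℝ (Fin 3) => ‖y - p_o‖) hφ hn
    convert this using 2
    exact hG _
  refine ⟨hGrad.differentiableAt, ?_⟩
  rw [hGrad.gradient, ← neg_smul, neg_neg, ← hrdef]
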